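/- Let L be a semivalid representation of a connected graph G and α a 1-dimensional cone of the fan P(L). Then there is at most one broken cone β ∈ P(L) whose closure contains α. -/
import Mathlib
set_option linter.unusedSectionVars false
set_option linter.unusedVariables false


open Matrix Set

variable {V : Type*} [Fintype V] [DecidableEq V]

/-- Positive support of a vector. -/
def posSupp (x : V → ℝ) : Set V := {v | 0 < x v}

/-- Negative support of a vector. -/
def negSupp (x : V → ℝ) : Set V := {v | x v < 0}

/-- Support of a vector. -/
def supp (x : V → ℝ) : Set V := {v | x v ≠ 0}

/-- External neighborhood of a set of vertices. -/
def nbhd (G : SimpleGraph V) (S : Set V) : Set V := {v | v ∉ S ∧ ∃ u ∈ S, G.Adj u v}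

/-- Number of connected components of the subgraph induced by `S`. -/
noncomputable def compCount (G : SimpleGraph V) (S : Set V) : ℕ :=
  Nat.card (G.induce S).ConnectedComponent

/-- `C` is (the vertex set of) a connected component of the subgraph induced by `S`. -/
def IsComponentOf (G : SimpleGraph V) (S C : Set V) : Prop :=
  ∃ K : (G.induce S).ConnectedComponent, C = Subtype.val '' K.supp

/-- `M ∈ M(G)`: a real symmetric matrix with exactly one negative eigenvalue
(counted with multiplicity), negative entries on edges and zero off-diagonal
entries on non-edges. -/
structure CdVMatrix (G : SimpleGraph V) (M : Matrix V V ℝ) : Prop where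
  herm : M.IsHermitian
  edge_neg : ∀ u v, G.Adj u v → M u v < 0
  nonedge_zero : ∀ u v, u ≠ v → ¬ G.Adj u v → M u v = 0
  one_neg : {i | herm.eigenvalues i < 0}.ncard = 1

/-- Semivalid representation of a graph: conditions (i)-(iv). -/
def Semivalid (G : SimpleGraph V) (L : Submodule ℝ (V → ℝ)) : Prop :=
  ∀ x ∈ L, x ≠ 0 →
    ((posSupp x).Nonempty ∧ (negSupp x).Nonempty) ∧
    ((G.induce (posSupp x)).Connected ∨
      (compCount G (posSupp x) = 2 ∧ (G.induce (negSupp x)).Connected)) ∧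
    ((∀ y ∈ L, y ≠ 0 → supp y ⊆ supp x → supp y = supp x) →
      (G.induce (posSupp x)).Connected ∧ (G.induce (negSupp x)).Connected) ∧
    (¬ (G.induce (posSupp x)).Connected →
      (∀ u ∈ posSupp x, ∀ v ∈ negSupp x, ¬ G.Adj u v) ∧
      (∀ C : Set V, IsComponentOf G (supp x) C → nbhd G C = nbhd G (supp x)))

/-- The sign-pattern cone of `x` in `L` (a relatively open cone of the fan `P(L)`). -/
def signCone (L : Submodule ℝ (V → ℝ)) (x : V → ℝ) : Set (V → ℝ) :=
  {y | y ∈ L ∧ posSupp y = posSupp x ∧ negSupp y = negSupp x}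

/-- The dimension of the cone of `x`, i.e. the dimension of its linear span. -/
noncomputable def coneDim (L : Submodule ℝ (V → ℝ)) (x : V → ℝ) : ℕ :=
  Module.finrank ℝ (Submodule.span ℝ (signCone L x))

/-- The graph parameter η: maximal dimension of a semivalid representation. -/
noncomputable def etaParam (G : SimpleGraph V) : ℕ :=
  sSup {n | ∃ L : Submodule ℝ (V → ℝ), Semivalid G L ∧ Module.finrank ℝ L = n}

/-- Valid representation of a graph. -/
def Valid (G : SimpleGraph V) (X : Submodule ℝ (V → ℝ)) : Prop :=
  ∀ x ∈ X, x ≠ 0 → (G.induce (posSupp x)).Connected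

/-- The graph parameter λ: maximal dimension of a valid representation. -/
noncomputable def lambdaParam (G : SimpleGraph V) : ℕ :=
  sSup {n | ∃ X : Submodule ℝ (V → ℝ), Valid G X ∧ Module.finrank ℝ X = n}

/-- The Strong Arnold hypothesis. -/
def SAH (G : SimpleGraph V) (M : Matrix V V ℝ) : Prop :=
  ∀ X : Matrix V V ℝ, X.IsSymm → (∀ u v, (u = v ∨ G.Adj u v) → X u v = 0) →
    M * X = 0 → X = 0

/-- The Colin de Verdière parameter μ. -/
noncomputable def muParam (G : SimpleGraph V) : ℕ :=
  sSup {n | ∃ M : Matrix V V ℝ, CdVMatrix G M ∧ SAH G M ∧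
    Module.finrank ℝ (LinearMap.ker M.mulVecLin) = n}

lemma posSupp_neg (x : V → ℝ) : posSupp (-x) = negSupp x := by
  ext v; simp [posSupp, negSupp]

lemma negSupp_neg (x : V → ℝ) : negSupp (-x) = posSupp x := by
  ext v; simp [posSupp, negSupp]

lemma supp_eq (x : V → ℝ) : supp x = posSupp x ∪ negSupp x := by
  ext v
  simp only [supp, posSupp, negSupp, mem_setOf_eq, mem_union]
  constructor
  · intro h; rcases h.lt_or_gt with h | h
    · exact Or.inr h
    · exact Or.inl h
  · rintro (h | h) <;> [exact ne_of_gt h; exact ne_of_lt h]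

lemma pos_neg_disj (x : V → ℝ) {v : V} (h1 : v ∈ posSupp x) (h2 : v ∈ negSupp x) : False := by
  simp only [posSupp, negSupp, mem_setOf_eq] at h1 h2; linarith

lemma reach_mem {α : Type*} {H : SimpleGraph α} {P : Set α}
    (hP : ∀ ⦃a b : α⦄, H.Adj a b → a ∈ P → b ∈ P) {u v : α}
    (h : H.Reachable u v) (hu : u ∈ P) : v ∈ P := by
  obtain ⟨w⟩ := h
  induction w with
  | nil => exact hu
  | cons ha _ ih => exact ih (hP ha hu)

lemma induce_adj' {G : SimpleGraph V} {S : Set V} {a b : S} :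
    (G.induce S).Adj a b ↔ G.Adj a.1 b.1 := by
  simp [SimpleGraph.comap]


lemma reach_up {G : SimpleGraph V} {P S : Set V} (hPS : P ⊆ S) {u v : V}
    {hu : u ∈ P} {hv : v ∈ P}
    (h : (G.induce P).Reachable ⟨u, hu⟩ ⟨v, hv⟩) :
    (G.induce S).Reachable ⟨u, hPS hu⟩ ⟨v, hPS hv⟩ :=
  SimpleGraph.Reachable.map
    (⟨fun a => ⟨a.1, hPS a.2⟩, fun h => by simpa using h⟩ : G.induce P →g G.induce S) h

lemma reach_down {G : SimpleGraph V} {P S : Set V} (hPS : P ⊆ S)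
    (hcl : ∀ a ∈ P, ∀ b ∈ S \ P, ¬ G.Adj a b) {u v : ↥S}
    (h : (G.induce S).Reachable u v) (hu : u.1 ∈ P) (hv : v.1 ∈ P) :
    (G.induce P).Reachable ⟨u.1, hu⟩ ⟨v.1, hv⟩ := by
  suffices H : ∀ {a b : ↥S} (w : (G.induce S).Walk a b) (ha : a.1 ∈ P) (hb : b.1 ∈ P),
      (G.induce P).Reachable ⟨a.1, ha⟩ ⟨b.1, hb⟩ by
    obtain ⟨w⟩ := h; exact H w hu hv
  intro a b w
  induction w with
  | nil => intro ha hb; exact SimpleGraph.Reachable.refl _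
  | @cons a c b had wtl ih =>
      intro ha hb
      have hadj : G.Adj a.1 c.1 := induce_adj'.mp had
      have hc : c.1 ∈ P := by
        by_contra hcP
        exact hcl a.1 ha c.1 ⟨c.2, hcP⟩ hadj
      exact (SimpleGraph.Adj.reachable
        (show (G.induce P).Adj ⟨a.1, ha⟩ ⟨c.1, hc⟩ from induce_adj'.mpr hadj)).trans (ih hc hb)




/-- G1: a set split into two nonempty non-adjacent parts induces a disconnected graph. -/
lemma not_conn {G : SimpleGraph V} {P Q : Set V}
    (hP : P.Nonempty) (hQ : Q.Nonempty)
    (hdisj : ∀ v, v ∈ P → v ∈ Q → False)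
    (hPQ : ∀ u ∈ P, ∀ v ∈ Q, ¬ G.Adj u v) :
    ¬ (G.induce (P ∪ Q)).Connected := by
  intro hc
  obtain ⟨p, hp⟩ := hP
  obtain ⟨q, hq⟩ := hQ
  have hreach := hc.preconnected ⟨p, Or.inl hp⟩ ⟨q, Or.inr hq⟩
  have : q ∈ P := by
    refine reach_mem (P := {z : ↥(P ∪ Q) | z.1 ∈ P}) ?_ hreach hp
    intro a b hab ha
    have hadj : G.Adj a.1 b.1 := induce_adj'.mp hab
    rcases b.2 with hb | hb
    · exact hb
    · exact absurd hadj (hPQ a.1 ha b.1 hb)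
  exact hdisj q this hq

/-- G3: in a connected induced subgraph, any proper nonempty part has an edge leaving it. -/
lemma edge_across {G : SimpleGraph V} {S P : Set V}
    (hconn : (G.induce S).Connected) (hPS : P ⊆ S)
    (hP : P.Nonempty) (hQ : (S \ P).Nonempty) :
    ∃ u ∈ P, ∃ v ∈ S \ P, G.Adj u v := by
  by_contra hno
  push_neg at hno
  obtain ⟨p, hp⟩ := hP
  obtain ⟨q, hq⟩ := hQ
  have hreach := hconn.preconnected ⟨p, hPS hp⟩ ⟨q, hq.1⟩
  have : q ∈ P := by
    refine reach_mem (P := {z : ↥S | z.1 ∈ P}) ?_ hreach hp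
    intro a b hab ha
    have hadj : G.Adj a.1 b.1 := induce_adj'.mp hab
    by_contra hbP
    exact hno a.1 ha b.1 ⟨b.2, hbP⟩ hadj
  exact hq.2 this

/-- C1: construction of components. -/
lemma isComponentOf_mk {G : SimpleGraph V} {S C : Set V}
    (hCS : C ⊆ S) (hconn : (G.induce C).Connected)
    (hcl : ∀ a ∈ C, ∀ b ∈ S, G.Adj a b → b ∈ C)
    (hne : C.Nonempty) : IsComponentOf G S C := by
  obtain ⟨c₀, hc₀⟩ := hne
  refine ⟨(G.induce S).connectedComponentMk ⟨c₀, hCS hc₀⟩, ?_⟩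
  ext v
  constructor
  · intro hv
    refine ⟨⟨v, hCS hv⟩, ?_, rfl⟩
    rw [SimpleGraph.ConnectedComponent.mem_supp_iff, SimpleGraph.ConnectedComponent.eq]
    exact reach_up hCS (hconn.preconnected ⟨v, hv⟩ ⟨c₀, hc₀⟩)
  · rintro ⟨⟨w, hwS⟩, hw, rfl⟩
    rw [SimpleGraph.ConnectedComponent.mem_supp_iff, SimpleGraph.ConnectedComponent.eq] at hw
    refine reach_mem (P := {z : ↥S | z.1 ∈ C}) ?_ hw.symm hc₀
    intro a b hab ha
    exact hcl a.1 ha b.1 b.2 (induce_adj'.mp hab)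


/-- T1: closure extraction. -/
lemma mem_closure_signCone {L : Submodule ℝ (V → ℝ)} {y x : V → ℝ}
    (hx : x ∈ closure (signCone L y)) :
    (∀ v ∈ posSupp y, 0 ≤ x v) ∧ (∀ v ∈ negSupp y, x v ≤ 0) ∧
    (∀ v, v ∉ supp y → x v = 0) := by
  refine ⟨fun v hv => ?_, fun v hv => ?_, fun v hv => ?_⟩
  · have hcl : IsClosed {z : V → ℝ | 0 ≤ z v} := isClosed_Ici.preimage (continuous_apply v)
    have hsub : signCone L y ⊆ {z : V → ℝ | 0 ≤ z v} := by
      rintro z ⟨-, hzp, -⟩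
      have h' : v ∈ posSupp z := by rw [hzp]; exact hv
      exact le_of_lt (show (0:ℝ) < z v from h')
    exact closure_minimal hsub hcl hx
  · have hcl : IsClosed {z : V → ℝ | z v ≤ 0} := isClosed_Iic.preimage (continuous_apply v)
    have hsub : signCone L y ⊆ {z : V → ℝ | z v ≤ 0} := by
      rintro z ⟨-, -, hzn⟩
      have h' : v ∈ negSupp z := by rw [hzn]; exact hv
      exact le_of_lt (show z v < (0:ℝ) from h')
    exact closure_minimal hsub hcl hx
  · have hcl : IsClosed {z : V → ℝ | z v = 0} := isClosed_singleton.preimage (continuous_apply v)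
    have hsub : signCone L y ⊆ {z : V → ℝ | z v = 0} := by
      rintro z ⟨-, hzp, hzn⟩
      rw [supp_eq, Set.mem_union] at hv
      push_neg at hv
      have h1 : v ∉ posSupp z := hzp ▸ hv.1
      have h2 : v ∉ negSupp z := hzn ▸ hv.2
      simp only [posSupp, negSupp, Set.mem_setOf_eq, not_lt] at h1 h2
      exact le_antisymm h1 h2
    exact closure_minimal hsub hcl hx

/-- T3: perturbation. -/
lemma perturb {L : Submodule ℝ (V → ℝ)} {a b : V → ℝ} (ha : a ∈ L) (hb : b ∈ L) :
    ∃ z ∈ L, posSupp z = posSupp a ∪ (posSupp b \ supp a) ∧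
      negSupp z = negSupp a ∪ (negSupp b \ supp a) := by
  by_cases h0 : a = 0
  · refine ⟨b, hb, ?_, ?_⟩ <;>
      simp [h0, posSupp, negSupp, supp]
  · have hne : (Finset.univ.filter (fun v => a v ≠ 0)).Nonempty := by
      rw [Finset.filter_nonempty_iff]
      obtain ⟨v, hv⟩ := Function.ne_iff.mp h0
      exact ⟨v, Finset.mem_univ v, hv⟩
    have hVne : Nonempty V := ⟨hne.choose⟩
    set m : ℝ := (Finset.univ.filter (fun v => a v ≠ 0)).inf' hne (fun v => |a v|) with hm
    set M : ℝ := Finset.univ.sup' Finset.univ_nonempty (fun v => |b v|) + 1 with hM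
    have hm0 : 0 < m := by
      rw [hm, Finset.lt_inf'_iff]
      intro v hv
      rw [Finset.mem_filter] at hv
      exact abs_pos.mpr hv.2
    have hM0 : 0 < M := by
      have : (0:ℝ) ≤ Finset.univ.sup' Finset.univ_nonempty (fun v => |b v|) := by
        obtain ⟨v⟩ := hVne
        exact le_trans (abs_nonneg (b v)) (Finset.le_sup' (fun v => |b v|) (Finset.mem_univ v))
      linarith
    set ε : ℝ := m / M with hε
    have hε0 : 0 < ε := div_pos hm0 hM0
    have key : ∀ v, a v ≠ 0 → |ε * b v| < |a v| := by
      intro v hv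
      have h1 : m ≤ |a v| := Finset.inf'_le _ (Finset.mem_filter.mpr ⟨Finset.mem_univ v, hv⟩)
      have h2 : |b v| < M := by
        rw [hM]
        have := Finset.le_sup' (fun v => |b v|) (Finset.mem_univ v)
        linarith
      calc |ε * b v| = ε * |b v| := by rw [abs_mul, abs_of_pos hε0]
        _ < ε * M := by nlinarith [mul_pos hε0 (sub_pos.mpr h2)]
        _ = m := by rw [hε, div_mul_cancel₀ _ (ne_of_gt hM0)]
        _ ≤ |a v| := h1
    refine ⟨a + ε • b, L.add_mem ha (L.smul_mem ε hb), ?_, ?_⟩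
    · ext v
      simp only [posSupp, supp, negSupp, Set.mem_setOf_eq, Set.mem_union, Set.mem_diff,
        Pi.add_apply, Pi.smul_apply, smul_eq_mul, ne_eq, not_not]
      by_cases hv : a v = 0
      · simp only [hv, zero_add, lt_self_iff_false, false_or, and_true]
        rw [mul_pos_iff]
        constructor
        · rintro (⟨-, h⟩ | ⟨h, -⟩)
          · exact h
          · linarith
        · intro h; exact Or.inl ⟨hε0, h⟩
      · have habs := abs_lt.mp (key v hv)
        rcases lt_or_gt_of_ne hv with hneg | hpos
        · rw [abs_of_neg hneg] at habs
          constructor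
          · intro h; exfalso; linarith [habs.2]
          · rintro (h | ⟨-, h⟩)
            · exfalso; linarith
            · exact absurd h hv
        · rw [abs_of_pos hpos] at habs
          constructor
          · intro _; exact Or.inl hpos
          · intro _; linarith [habs.1]
    · ext v
      simp only [posSupp, supp, negSupp, Set.mem_setOf_eq, Set.mem_union, Set.mem_diff,
        Pi.add_apply, Pi.smul_apply, smul_eq_mul, ne_eq, not_not]
      by_cases hv : a v = 0
      · simp only [hv, zero_add, lt_self_iff_false, false_or, and_true]
        rw [mul_neg_iff]
        constructor
        · rintro (⟨-, h⟩ | ⟨h, -⟩)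
          · exact h
          · linarith
        · intro h; exact Or.inl ⟨hε0, h⟩
      · have habs := abs_lt.mp (key v hv)
        rcases lt_or_gt_of_ne hv with hneg | hpos
        · rw [abs_of_neg hneg] at habs
          constructor
          · intro _; exact Or.inl hneg
          · intro _; linarith [habs.2]
        · rw [abs_of_pos hpos] at habs
          constructor
          · intro h; exfalso; linarith [habs.1]
          · rintro (h | ⟨-, h⟩)
            · exfalso; linarith
            · exact absurd h hv

lemma supp_neg (x : V → ℝ) : supp (-x) = supp x := by
  ext v; simp [supp]

lemma ne_zero_of_posSupp {x : V → ℝ} (h : (posSupp x).Nonempty) : x ≠ 0 := by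
  obtain ⟨v, hv⟩ := h
  intro h0
  rw [h0] at hv
  exact lt_irrefl 0 (show (0:ℝ) < 0 from hv)

/-- inclusions of supports from closure membership -/
lemma closure_subsets {L : Submodule ℝ (V → ℝ)} {y x : V → ℝ}
    (hx : x ∈ closure (signCone L y)) :
    posSupp x ⊆ posSupp y ∧ negSupp x ⊆ negSupp y := by
  obtain ⟨hp, hn, hz⟩ := mem_closure_signCone hx
  constructor
  · intro v hv
    have hv' : (0:ℝ) < x v := hv
    by_contra hvy
    by_cases hvn : v ∈ negSupp y
    · linarith [hn v hvn]
    · have : v ∉ supp y := by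
        rw [supp_eq]; rintro (h | h) <;> contradiction
      linarith [hz v this]
  · intro v hv
    have hv' : x v < (0:ℝ) := hv
    by_contra hvy
    by_cases hvp : v ∈ posSupp y
    · linarith [hp v hvp]
    · have : v ∉ supp y := by
        rw [supp_eq]; rintro (h | h) <;> contradiction
      linarith [hz v this]

/-- the reachability class of a vertex within an induced subgraph -/
lemma reachClass {G : SimpleGraph V} {A : Set V} {a₀ : V} (ha₀ : a₀ ∈ A) :
    ∃ C : Set V, a₀ ∈ C ∧ C ⊆ A ∧ (G.induce C).Connected ∧
      (∀ u ∈ C, ∀ v ∈ A, G.Adj u v → v ∈ C) := by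
  refine ⟨{v | ∃ hv : v ∈ A, (G.induce A).Reachable ⟨v, hv⟩ ⟨a₀, ha₀⟩},
    ⟨ha₀, SimpleGraph.Reachable.refl _⟩, fun v hv => hv.1, ?_, ?_⟩
  · rw [SimpleGraph.connected_iff]
    constructor
    · rintro ⟨u, hu, hru⟩ ⟨v, hv, hrv⟩
      have hsub : {w | ∃ hw : w ∈ A, (G.induce A).Reachable ⟨w, hw⟩ ⟨a₀, ha₀⟩} ⊆ A :=
        fun w hw => hw.1
      have hcl : ∀ a ∈ {w | ∃ hw : w ∈ A, (G.induce A).Reachable ⟨w, hw⟩ ⟨a₀, ha₀⟩},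
          ∀ b ∈ A \ {w | ∃ hw : w ∈ A, (G.induce A).Reachable ⟨w, hw⟩ ⟨a₀, ha₀⟩},
          ¬ G.Adj a b := by
        rintro a ⟨haA, hra⟩ b ⟨hbA, hbn⟩ hadj
        exact hbn ⟨hbA, (SimpleGraph.Adj.reachable
          (induce_adj'.mpr hadj.symm : (G.induce A).Adj ⟨b, hbA⟩ ⟨a, haA⟩)).trans hra⟩
      have := reach_down (G := G) hsub hcl
        (u := ⟨u, hu⟩) (v := ⟨v, hv⟩) (hru.trans hrv.symm) ⟨hu, hru⟩ ⟨hv, hrv⟩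
      exact this
    · exact ⟨⟨a₀, ha₀, SimpleGraph.Reachable.refl _⟩⟩
  · rintro u ⟨huA, hru⟩ v hvA hadj
    exact ⟨hvA, (SimpleGraph.Adj.reachable
      (induce_adj'.mpr hadj.symm : (G.induce A).Adj ⟨v, hvA⟩ ⟨u, huA⟩)).trans hru⟩

lemma compCount_ne_two {G : SimpleGraph V} {S : Set V} {u v w : V}
    (hu : u ∈ S) (hv : v ∈ S) (hw : w ∈ S)
    (h12 : ¬ (G.induce S).Reachable ⟨u, hu⟩ ⟨v, hv⟩)
    (h13 : ¬ (G.induce S).Reachable ⟨u, hu⟩ ⟨w, hw⟩)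
    (h23 : ¬ (G.induce S).Reachable ⟨v, hv⟩ ⟨w, hw⟩) :
    compCount G S ≠ 2 := by
  intro h2c
  rw [compCount, Nat.card_eq_two_iff] at h2c
  obtain ⟨a, b, -, hab⟩ := h2c
  have mem : ∀ z : (G.induce S).ConnectedComponent, z = a ∨ z = b := by
    intro z
    have : z ∈ ({a, b} : Set _) := hab ▸ Set.mem_univ z
    simpa using this
  have e12 : (G.induce S).connectedComponentMk ⟨u, hu⟩ =
      (G.induce S).connectedComponentMk ⟨v, hv⟩ → False :=
    fun e => h12 (SimpleGraph.ConnectedComponent.eq.mp e)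
  have e13 : (G.induce S).connectedComponentMk ⟨u, hu⟩ =
      (G.induce S).connectedComponentMk ⟨w, hw⟩ → False :=
    fun e => h13 (SimpleGraph.ConnectedComponent.eq.mp e)
  have e23 : (G.induce S).connectedComponentMk ⟨v, hv⟩ =
      (G.induce S).connectedComponentMk ⟨w, hw⟩ → False :=
    fun e => h23 (SimpleGraph.ConnectedComponent.eq.mp e)
  rcases mem ((G.induce S).connectedComponentMk ⟨u, hu⟩) with h1' | h1' <;>
    rcases mem ((G.induce S).connectedComponentMk ⟨v, hv⟩) with h2' | h2' <;>
    rcases mem ((G.induce S).connectedComponentMk ⟨w, hw⟩) with h3' | h3' <;>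
    first
      | exact e12 (h1'.trans h2'.symm)
      | exact e13 (h1'.trans h3'.symm)
      | exact e23 (h2'.trans h3'.symm)


lemma diff_pos_eq {x y : V → ℝ} (hNB : negSupp x ⊆ negSupp y) :
    posSupp y \ supp x = posSupp y \ posSupp x := by
  ext v
  rw [supp_eq]
  simp only [Set.mem_diff, Set.mem_union]
  constructor
  · rintro ⟨h1, h2⟩; exact ⟨h1, fun h => h2 (Or.inl h)⟩
  · rintro ⟨h1, h2⟩
    refine ⟨h1, ?_⟩
    rintro (h | h)
    · exact h2 h
    · exact pos_neg_disj y h1 (hNB h)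

lemma diff_neg_eq {x y : V → ℝ} (hPA : posSupp x ⊆ posSupp y) :
    negSupp y \ supp x = negSupp y \ negSupp x := by
  ext v
  rw [supp_eq]
  simp only [Set.mem_diff, Set.mem_union]
  constructor
  · rintro ⟨h1, h2⟩; exact ⟨h1, fun h => h2 (Or.inr h)⟩
  · rintro ⟨h1, h2⟩
    refine ⟨h1, ?_⟩
    rintro (h | h)
    · exact pos_neg_disj y (hPA h) h1
    · exact h2 h

lemma nonempty_of_ne_subset {P Q : Set V} (hsub : P ⊆ Q) (hne : P ≠ Q) :
    (Q \ P).Nonempty := by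
  by_contra h
  rw [Set.not_nonempty_iff_eq_empty, Set.diff_eq_empty] at h
  exact hne (Set.Subset.antisymm hsub h)

/-- Step 1: the sign pattern of a 1-dim cone in the closure of a broken cone agrees with
the broken cone either on the positive or on the negative side. -/
lemma step1 {G : SimpleGraph V} {L : Submodule ℝ (V → ℝ)} (hL : Semivalid G L)
    {x y : V → ℝ} (hx : x ∈ L) (hx0 : x ≠ 0) (hy : y ∈ L) (hy0 : y ≠ 0)
    (hb : ¬ (G.induce (posSupp y)).Connected)
    (hxc : x ∈ closure (signCone L y)) :
    posSupp x = posSupp y ∨ negSupp x = negSupp y := by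
  obtain ⟨⟨hA, hB⟩, hii, -, hiv⟩ := hL y hy hy0
  obtain ⟨noAB, -⟩ := hiv hb
  obtain ⟨⟨hPx, hNx⟩, -, -, -⟩ := hL x hx hx0
  obtain ⟨hPA, hNB⟩ := closure_subsets hxc
  by_contra hcon
  push_neg at hcon
  obtain ⟨hne1, hne2⟩ := hcon
  have hAP : (posSupp y \ posSupp x).Nonempty := nonempty_of_ne_subset hPA hne1
  have hBN : (negSupp y \ negSupp x).Nonempty := nonempty_of_ne_subset hNB hne2
  obtain ⟨z, hz, hzp, hzn⟩ := perturb (L.neg_mem hx) hy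
  rw [posSupp_neg, supp_neg, diff_pos_eq hNB] at hzp
  rw [negSupp_neg, supp_neg, diff_neg_eq hPA] at hzn
  have hz0 : z ≠ 0 := ne_zero_of_posSupp (by
    rw [hzp]; exact ⟨hNx.choose, Or.inl hNx.choose_spec⟩)
  obtain ⟨-, hiiz, -, -⟩ := hL z hz hz0
  rcases hiiz with hcon1 | ⟨-, hcon2⟩
  · rw [hzp] at hcon1
    refine not_conn hNx hAP ?_ ?_ hcon1
    · intro v hv1 hv2
      exact pos_neg_disj y hv2.1 (hNB hv1)
    · intro u hu v hv hadj
      exact noAB v hv.1 u (hNB hu) hadj.symm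
  · rw [hzn] at hcon2
    refine not_conn hPx hBN ?_ ?_ hcon2
    · intro v hv1 hv2
      exact pos_neg_disj y (hPA hv1) hv2.1
    · intro u hu v hv hadj
      exact noAB u (hPA hu) v hv.1 hadj

/-- Case: the two broken cones have the same negative support. -/
lemma subcaseB {G : SimpleGraph V} {L : Submodule ℝ (V → ℝ)} (hL : Semivalid G L)
    {y₁ y₂ : V → ℝ} (hy₁ : y₁ ∈ L) (hy₁0 : y₁ ≠ 0) (hy₂ : y₂ ∈ L) (hy₂0 : y₂ ≠ 0)
    (hb₁ : ¬ (G.induce (posSupp y₁)).Connected)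
    (hb₂ : ¬ (G.induce (posSupp y₂)).Connected)
    (hBB' : negSupp y₁ = negSupp y₂) :
    posSupp y₂ ⊆ posSupp y₁ := by
  obtain ⟨⟨hA, hB⟩, -, -, -⟩ := hL y₁ hy₁ hy₁0
  obtain ⟨-, -, -, hiv₂⟩ := hL y₂ hy₂ hy₂0
  obtain ⟨noA'B', -⟩ := hiv₂ hb₂
  obtain ⟨w, hw, hwp, hwn⟩ := perturb hy₁ (L.neg_mem hy₂)
  rw [posSupp_neg] at hwp
  rw [negSupp_neg] at hwn
  have h1 : negSupp y₂ \ supp y₁ = ∅ := by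
    rw [← hBB', supp_eq, Set.diff_eq_empty]
    exact Set.subset_union_right
  rw [h1, Set.union_empty] at hwp
  have h2 : posSupp y₂ \ supp y₁ = posSupp y₂ \ posSupp y₁ := by
    ext v
    rw [supp_eq]
    simp only [Set.mem_diff, Set.mem_union]
    constructor
    · rintro ⟨ha, hb⟩; exact ⟨ha, fun h => hb (Or.inl h)⟩
    · rintro ⟨ha, hb⟩
      refine ⟨ha, ?_⟩
      rintro (h | h)
      · exact hb h
      · exact pos_neg_disj y₂ ha (hBB' ▸ h)
  rw [h2] at hwn
  intro v hv
  by_contra hvA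
  have hne : (posSupp y₂ \ posSupp y₁).Nonempty := ⟨v, hv, hvA⟩
  have hw0 : w ≠ 0 := ne_zero_of_posSupp (by rw [hwp]; exact hA)
  obtain ⟨-, hiiw, -, -⟩ := hL w hw hw0
  rcases hiiw with hcw | ⟨-, hcw⟩
  · rw [hwp] at hcw; exact hb₁ hcw
  · rw [hwn] at hcw
    refine not_conn hB hne ?_ ?_ hcw
    · intro u hu1 hu2
      exact pos_neg_disj y₂ hu2.1 (hBB' ▸ hu1)
    · intro u hu q hq hadj
      exact noA'B' q hq.1 u (hBB' ▸ hu) hadj.symm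

/-- Case: the two broken cones have the same positive support. -/
lemma subcaseA {G : SimpleGraph V} {L : Submodule ℝ (V → ℝ)} (hL : Semivalid G L)
    {y₁ y₂ : V → ℝ} (hy₁ : y₁ ∈ L) (hy₁0 : y₁ ≠ 0) (hy₂ : y₂ ∈ L) (hy₂0 : y₂ ≠ 0)
    (hb₁ : ¬ (G.induce (posSupp y₁)).Connected)
    (hb₂ : ¬ (G.induce (posSupp y₂)).Connected)
    (hAA' : posSupp y₁ = posSupp y₂)
    (hmeet : (negSupp y₁ ∩ negSupp y₂).Nonempty) :
    negSupp y₂ ⊆ negSupp y₁ := by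
  obtain ⟨⟨hA, hB⟩, -, -, -⟩ := hL y₁ hy₁ hy₁0
  obtain ⟨⟨hA', hB'⟩, hii₂, -, hiv₂⟩ := hL y₂ hy₂ hy₂0
  obtain ⟨noA'B', -⟩ := hiv₂ hb₂
  have hB'conn : (G.induce (negSupp y₂)).Connected := by
    rcases hii₂ with h | h
    · exact absurd h hb₂
    · exact h.2
  obtain ⟨w, hw, hwp, hwn⟩ := perturb hy₁ (L.neg_mem hy₂)
  rw [posSupp_neg] at hwp
  rw [negSupp_neg] at hwn
  have h1 : posSupp y₂ \ supp y₁ = ∅ := by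
    rw [← hAA', supp_eq, Set.diff_eq_empty]
    exact Set.subset_union_left
  rw [h1, Set.union_empty] at hwn
  have h2 : negSupp y₂ \ supp y₁ = negSupp y₂ \ negSupp y₁ := by
    ext q
    rw [supp_eq]
    simp only [Set.mem_diff, Set.mem_union]
    constructor
    · rintro ⟨ha, hb⟩; exact ⟨ha, fun h => hb (Or.inr h)⟩
    · rintro ⟨ha, hb⟩
      refine ⟨ha, ?_⟩
      rintro (h | h)
      · exact pos_neg_disj y₂ (hAA' ▸ h) ha
      · exact hb h
  rw [h2] at hwp
  intro v hv
  by_contra hvB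
  have hne : (negSupp y₂ \ negSupp y₁).Nonempty := ⟨v, hv, hvB⟩
  have hw0 : w ≠ 0 := ne_zero_of_posSupp
    (by rw [hwp]; exact ⟨hA.choose, Or.inl hA.choose_spec⟩)
  have hbw : ¬ (G.induce (posSupp w)).Connected := by
    rw [hwp]
    refine not_conn hA hne ?_ ?_
    · intro u hu1 hu2
      exact pos_neg_disj y₂ (hAA' ▸ hu1) hu2.1
    · intro u hu q hq hadj
      exact noA'B' u (hAA' ▸ hu) q hq.1 hadj
  obtain ⟨-, -, -, hivw⟩ := hL w hw hw0
  obtain ⟨noW, -⟩ := hivw hbw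
  obtain ⟨u, hu, q, hq, hadj⟩ := edge_across hB'conn
    (P := negSupp y₁ ∩ negSupp y₂) Set.inter_subset_right hmeet
    ⟨v, hv, fun h => hvB h.1⟩
  have hqpos : q ∈ posSupp w := by
    rw [hwp]
    exact Or.inr ⟨hq.1, fun h => hq.2 ⟨h, hq.1⟩⟩
  have huneg : u ∈ negSupp w := by
    rw [hwn]
    exact hu.1
  exact noW q hqpos u huneg hadj.symm

/-- Mixed case: the 1-dim cone agrees with the positive support of the first broken cone
and the negative support of the second. -/
lemma mixed {G : SimpleGraph V} {L : Submodule ℝ (V → ℝ)} (hL : Semivalid G L)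
    {x y₁ y₂ : V → ℝ} (hx : x ∈ L) (hx0 : x ≠ 0)
    (hy₁ : y₁ ∈ L) (hy₁0 : y₁ ≠ 0) (hy₂ : y₂ ∈ L) (hy₂0 : y₂ ≠ 0)
    (hb₁ : ¬ (G.induce (posSupp y₁)).Connected)
    (hb₂ : ¬ (G.induce (posSupp y₂)).Connected)
    (hPx : posSupp x = posSupp y₁) (hNx : negSupp x = negSupp y₂)
    (hPA' : posSupp x ⊆ posSupp y₂) (hNB : negSupp x ⊆ negSupp y₁) :
    posSupp y₁ = posSupp y₂ ∧ negSupp y₁ = negSupp y₂ := by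
  obtain ⟨⟨hA, hB⟩, hii₁, -, hiv₁⟩ := hL y₁ hy₁ hy₁0
  obtain ⟨noAB, hcmp₁⟩ := hiv₁ hb₁
  have hBconn : (G.induce (negSupp y₁)).Connected := by
    rcases hii₁ with h | h
    · exact absurd h hb₁
    · exact h.2
  obtain ⟨⟨hA', hB'⟩, hii₂, -, hiv₂⟩ := hL y₂ hy₂ hy₂0
  obtain ⟨noA'B', hcmp₂⟩ := hiv₂ hb₂
  obtain ⟨hcc₂, hB'conn⟩ : compCount G (posSupp y₂) = 2 ∧
      (G.induce (negSupp y₂)).Connected := by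
    rcases hii₂ with h | h
    · exact absurd h hb₂
    · exact h
  have hbx : ¬ (G.induce (posSupp x)).Connected := by rw [hPx]; exact hb₁
  obtain ⟨-, -, -, hivx⟩ := hL x hx hx0
  obtain ⟨noX, hcmpx⟩ := hivx hbx
  have hsx : supp x = posSupp y₁ ∪ negSupp y₂ := by rw [supp_eq, hPx, hNx]
  have hAA' : posSupp y₁ ⊆ posSupp y₂ := by rw [← hPx]; exact hPA'
  have hB'B : negSupp y₂ ⊆ negSupp y₁ := by rw [← hNx]; exact hNB
  -- B' is a component of G[supp x] and of G[supp y₂]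
  have hcompB'x : IsComponentOf G (supp x) (negSupp y₂) := by
    refine isComponentOf_mk ?_ hB'conn ?_ hB'
    · rw [hsx]; exact Set.subset_union_right
    · intro a ha b hb hadj
      rw [hsx] at hb
      rcases hb with hbA | hbB'
      · exfalso
        refine noX b ?_ a ?_ hadj.symm
        · rw [hPx]; exact hbA
        · rw [hNx]; exact ha
      · exact hbB'
  have hcompB'2 : IsComponentOf G (supp y₂) (negSupp y₂) := by
    refine isComponentOf_mk ?_ hB'conn ?_ hB'
    · rw [supp_eq]; exact Set.subset_union_right
    · intro a ha b hb hadj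
      rw [supp_eq] at hb
      rcases hb with hbA | hbB'
      · exact absurd hadj.symm (noA'B' b hbA a ha)
      · exact hbB'
  have hx2 : nbhd G (supp x) = nbhd G (supp y₂) :=
    (hcmpx _ hcompB'x).symm.trans (hcmp₂ _ hcompB'2)
  -- A₁, the component of a₀ in G[posSupp y₁], inside supp x and supp y₁
  obtain ⟨a₀, ha₀⟩ := hA
  obtain ⟨A₁, ha₀1, hA₁A, hA₁conn, hA₁cl⟩ := reachClass (G := G) ha₀
  have hcompA₁x : IsComponentOf G (supp x) A₁ := by
    refine isComponentOf_mk ?_ hA₁conn ?_ ⟨a₀, ha₀1⟩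
    · rw [hsx]; exact hA₁A.trans Set.subset_union_left
    · intro a ha b hb hadj
      rw [hsx] at hb
      rcases hb with hbA | hbB'
      · exact hA₁cl a ha b hbA hadj
      · exfalso
        refine noX a ?_ b ?_ hadj
        · rw [hPx]; exact hA₁A ha
        · rw [hNx]; exact hbB'
  have hcompA₁1 : IsComponentOf G (supp y₁) A₁ := by
    refine isComponentOf_mk ?_ hA₁conn ?_ ⟨a₀, ha₀1⟩
    · rw [supp_eq]; exact hA₁A.trans Set.subset_union_left
    · intro a ha b hb hadj
      rw [supp_eq] at hb
      rcases hb with hbA | hbB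
      · exact hA₁cl a ha b hbA hadj
      · exact absurd hadj (noAB a (hA₁A ha) b hbB)
  have hx1 : nbhd G (supp x) = nbhd G (supp y₁) :=
    (hcmpx _ hcompA₁x).symm.trans (hcmp₁ _ hcompA₁1)
  constructor
  · -- positive supports agree
    refine Set.Subset.antisymm hAA' ?_
    by_contra hsub
    have hne : (posSupp y₂ \ posSupp y₁).Nonempty := by
      by_contra h
      rw [Set.not_nonempty_iff_eq_empty, Set.diff_eq_empty] at h
      exact hsub h
    have noCross : ∀ p ∈ posSupp y₁, ∀ q ∈ posSupp y₂ \ posSupp y₁, ¬ G.Adj p q := by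
      intro p hp q hq hadj
      have hqx : q ∉ supp x := by
        rw [hsx]
        rintro (h | h)
        · exact hq.2 h
        · exact pos_neg_disj y₂ hq.1 h
      have hqnb : q ∈ nbhd G (supp x) := ⟨hqx, p, by rw [hsx]; exact Or.inl hp, hadj⟩
      rw [hx2] at hqnb
      exact hqnb.1 (by rw [supp_eq]; exact Or.inl hq.1)
    have hnpre : ¬ (G.induce (posSupp y₁)).Preconnected := by
      intro hpre
      exact hb₁ ((SimpleGraph.connected_iff _).mpr ⟨hpre, ⟨⟨a₀, ha₀⟩⟩⟩)
    rw [SimpleGraph.Preconnected] at hnpre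
    push_neg at hnpre
    obtain ⟨u, v, huv⟩ := hnpre
    obtain ⟨q, hq⟩ := hne
    have h12 : ¬ (G.induce (posSupp y₂)).Reachable ⟨u.1, hAA' u.2⟩ ⟨v.1, hAA' v.2⟩ := by
      intro hr
      exact huv (reach_down hAA' noCross hr u.2 v.2)
    have closedA : ∀ (a b : ↥(posSupp y₂)), (G.induce (posSupp y₂)).Adj a b →
        a.1 ∈ posSupp y₁ → b.1 ∈ posSupp y₁ := by
      intro a b hab ha
      by_contra hbm
      exact noCross a.1 ha b.1 ⟨b.2, hbm⟩ (induce_adj'.mp hab)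
    have h13 : ¬ (G.induce (posSupp y₂)).Reachable ⟨u.1, hAA' u.2⟩ ⟨q, hq.1⟩ := by
      intro hr
      exact hq.2 (reach_mem (P := {z : ↥(posSupp y₂) | z.1 ∈ posSupp y₁})
        (fun a b hab ha => closedA a b hab ha) hr u.2)
    have h23 : ¬ (G.induce (posSupp y₂)).Reachable ⟨v.1, hAA' v.2⟩ ⟨q, hq.1⟩ := by
      intro hr
      exact hq.2 (reach_mem (P := {z : ↥(posSupp y₂) | z.1 ∈ posSupp y₁})
        (fun a b hab ha => closedA a b hab ha) hr v.2)
    exact compCount_ne_two (hAA' u.2) (hAA' v.2) hq.1 h12 h13 h23 hcc₂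
  · -- negative supports agree
    refine Set.Subset.antisymm ?_ hB'B
    by_contra hsub
    have hne : (negSupp y₁ \ negSupp y₂).Nonempty := by
      by_contra h
      rw [Set.not_nonempty_iff_eq_empty, Set.diff_eq_empty] at h
      exact hsub h
    obtain ⟨u, hu, q, hq, hadj⟩ := edge_across hBconn (P := negSupp y₂) hB'B hB' hne
    have hqx : q ∉ supp x := by
      rw [hsx]
      rintro (h | h)
      · exact pos_neg_disj y₁ h hq.1
      · exact hq.2 h
    have hqnb : q ∈ nbhd G (supp x) := ⟨hqx, u, by rw [hsx]; exact Or.inr hu, hadj⟩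
    rw [hx1] at hqnb
    exact hqnb.1 (by rw [supp_eq]; exact Or.inr hq.1)

/-- a 1-dimensional cone of `P(L)` lies in the closure of at most one
broken cone. -/
theorem stmt6 (G : SimpleGraph V) (hG : G.Connected) (L : Submodule ℝ (V → ℝ))
    (hL : Semivalid G L) (x : V → ℝ) (hx : x ∈ L) (hx0 : x ≠ 0)
    (h1 : coneDim L x = 1)
    (y₁ y₂ : V → ℝ) (hy₁ : y₁ ∈ L) (hy₁0 : y₁ ≠ 0) (hy₂ : y₂ ∈ L) (hy₂0 : y₂ ≠ 0)
    (hb₁ : ¬ (G.induce (posSupp y₁)).Connected)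
    (hb₂ : ¬ (G.induce (posSupp y₂)).Connected)
    (hc₁ : signCone L x ⊆ closure (signCone L y₁))
    (hc₂ : signCone L x ⊆ closure (signCone L y₂)) :
    signCone L y₁ = signCone L y₂ := by
  have hxc₁ : x ∈ closure (signCone L y₁) := hc₁ ⟨hx, rfl, rfl⟩
  have hxc₂ : x ∈ closure (signCone L y₂) := hc₂ ⟨hx, rfl, rfl⟩
  obtain ⟨hPA, hNB⟩ := closure_subsets hxc₁
  obtain ⟨hPA', hNB'⟩ := closure_subsets hxc₂
  obtain ⟨⟨hPxne, hNxne⟩, -, -, -⟩ := hL x hx hx0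
  have key : posSupp y₁ = posSupp y₂ ∧ negSupp y₁ = negSupp y₂ := by
    rcases step1 hL hx hx0 hy₁ hy₁0 hb₁ hxc₁ with hP1 | hN1 <;>
      rcases step1 hL hx hx0 hy₂ hy₂0 hb₂ hxc₂ with hP2 | hN2
    · have hAA' : posSupp y₁ = posSupp y₂ := hP1.symm.trans hP2
      have hmeet : (negSupp y₁ ∩ negSupp y₂).Nonempty :=
        ⟨hNxne.choose, hNB hNxne.choose_spec, hNB' hNxne.choose_spec⟩
      refine ⟨hAA', Set.Subset.antisymm ?_ ?_⟩
      · exact subcaseA hL hy₂ hy₂0 hy₁ hy₁0 hb₂ hb₁ hAA'.symm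
          (by rwa [Set.inter_comm] at hmeet)
      · exact subcaseA hL hy₁ hy₁0 hy₂ hy₂0 hb₁ hb₂ hAA' hmeet
    · exact mixed hL hx hx0 hy₁ hy₁0 hy₂ hy₂0 hb₁ hb₂ hP1 hN2 hPA' hNB
    · obtain ⟨h1, h2⟩ := mixed hL hx hx0 hy₂ hy₂0 hy₁ hy₁0 hb₂ hb₁ hP2 hN1 hPA hNB'
      exact ⟨h1.symm, h2.symm⟩
    · have hBB' : negSupp y₁ = negSupp y₂ := hN1.symm.trans hN2
      refine ⟨Set.Subset.antisymm ?_ ?_, hBB'⟩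
      · exact subcaseB hL hy₂ hy₂0 hy₁ hy₁0 hb₂ hb₁ hBB'.symm
      · exact subcaseB hL hy₁ hy₁0 hy₂ hy₂0 hb₁ hb₂ hBB'
  ext z
  simp only [signCone, Set.mem_setOf_eq]
  rw [key.1, key.2]
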